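/- Let X be a K3 surface over ℚ̄ with Picard number ρ(X) ≥ 2, and suppose the Grothendieck group of the triangulated subcategory S* ⊂ D^b(X) generated by spherical objects equals the Beauville–Voisin subring R(X) ⊂ CH*(X) = K(X). Then CH²(X) ≅ ℤ holds if and only if D^b(X) = S*. -/

import Mathlib

/-!
STATEMENT 16: Let X be a K3 surface over ℚ̄ with Picard number ρ(X) ≥ 2, and suppose
that the Grothendieck group of the triangulated subcategory S* ⊂ D^b(X) generated by
spherical objects equals the Beauville–Voisin subring R(X) ⊂ CH*(X) = K(X).  Then
CH²(X) ≅ ℤ holds if and only if D^b(X) = S*.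

Since K3 surfaces, Chow groups and their derived categories are not available in
Mathlib, the situation is formalized through the data actually used in the proof:
`C` is a triangulated category (D^b(X)); `Sstar` is a dense strictly full triangulated
subcategory (S*); `NS` and `CH2` are the Néron–Severi group (of rank ρ(X) ≥ 2) and the
Chow group CH²(X); `kIso : K(D^b(X)) ≅ ℤ ⊕ NS ⊕ CH²` is the identification
CH*(X) = K(X) (no tensoring with ℚ is needed for K3 surfaces); `c : CH2` is the
Beauville–Voisin class c_X, of degree 1, and R(X) = ℤ ⊕ NS ⊕ ℤ·c_X; the hypothesis
`hR` says that the image of K(S*) → K(D^b(X)) is R(X) (the theorem of [HuyJEMS], valid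
for ρ(X) ≥ 2).  `CH²(X) ≅ ℤ` means that the degree map is bijective.
-/

open CategoryTheory Limits Pretriangulated

universe v u

variable (C : Type u) [Category.{v} C] [Preadditive C] [HasZeroObject C]
  [HasShift C ℤ] [∀ n : ℤ, (shiftFunctor C n).Additive] [Pretriangulated C]

namespace Triangulated

/-- A triangulated subcategory (as in the older Mathlib's `Triangulated.Subcategory`). -/
structure Subcategory where
  P : C → Prop
  zero' : ∃ (Z : C) (_ : IsZero Z), P Z
  shift (X : C) (n : ℤ) : P X → P (X⟦n⟧)
  ext₂' (T : Triangle C) (_ : T ∈ distTriang C) : P T.obj₁ → P T.obj₃ → ObjectProperty.isoClosure P T.obj₂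

end Triangulated

/-- The subgroup of relations defining the Grothendieck group of a triangulated
category: `[B] = [A] + [C]` for every distinguished triangle `A → B → C`. -/
def K0Relations : AddSubgroup (FreeAbelianGroup C) :=
  AddSubgroup.closure {x | ∃ T : Triangle C, (T ∈ distTriang C) ∧
    x = FreeAbelianGroup.of T.obj₂ - FreeAbelianGroup.of T.obj₁ - FreeAbelianGroup.of T.obj₃}

/-- The Grothendieck group `K(D)` of a triangulated category. -/
def K0 : Type u := FreeAbelianGroup C ⧸ K0Relations C

instance : AddCommGroup (K0 C) :=
  inferInstanceAs (AddCommGroup (FreeAbelianGroup C ⧸ K0Relations C))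

/-- The class `[X]` of an object in the Grothendieck group. -/
def K0.cls (X : C) : K0 C := QuotientAddGroup.mk' (K0Relations C) (FreeAbelianGroup.of X)

/-- Relations for the Grothendieck group of a (strictly full) triangulated subcategory
`S`: distinguished triangles of `D` with all three vertices in `S`. -/
def K0SubRelations (S : Triangulated.Subcategory C) :
    AddSubgroup (FreeAbelianGroup {X : C // S.P X}) :=
  AddSubgroup.closure {x | ∃ (T : Triangle C) (_ : T ∈ distTriang C)
    (h₁ : S.P T.obj₁) (h₂ : S.P T.obj₂) (h₃ : S.P T.obj₃),
    x = FreeAbelianGroup.of ⟨T.obj₂, h₂⟩ - FreeAbelianGroup.of ⟨T.obj₁, h₁⟩ -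
      FreeAbelianGroup.of ⟨T.obj₃, h₃⟩}

/-- The Grothendieck group `K(D₀)` of a (strictly full) triangulated subcategory. -/
def K0Sub (S : Triangulated.Subcategory C) : Type u :=
  FreeAbelianGroup {X : C // S.P X} ⧸ K0SubRelations C S

instance (S : Triangulated.Subcategory C) : AddCommGroup (K0Sub C S) :=
  inferInstanceAs (AddCommGroup (FreeAbelianGroup {X : C // S.P X} ⧸ K0SubRelations C S))

/-- The natural map `K(D₀) → K(D)` on Grothendieck groups induced by the inclusion of a
triangulated subcategory. -/
def K0.ofSub (S : Triangulated.Subcategory C) : K0Sub C S →+ K0 C :=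
  QuotientAddGroup.lift _ (FreeAbelianGroup.lift fun X : {X : C // S.P X} => K0.cls C X.1)
    (by
      intro x hx
      have hle : K0SubRelations C S ≤
          (FreeAbelianGroup.lift fun X : {X : C // S.P X} => K0.cls C X.1).ker := by
        rw [K0SubRelations, AddSubgroup.closure_le]
        rintro y ⟨T, hT, h₁, h₂, h₃, rfl⟩
        simp only [SetLike.mem_coe, AddMonoidHom.mem_ker, map_sub,
          FreeAbelianGroup.lift_apply_of]
        show K0.cls C T.obj₂ - K0.cls C T.obj₁ - K0.cls C T.obj₃ = 0
        simp only [K0.cls, ← map_sub, QuotientAddGroup.mk'_apply]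
        exact (QuotientAddGroup.eq_zero_iff _).2
          (AddSubgroup.subset_closure ⟨T, hT, rfl⟩)
      exact hle hx)

namespace Triangulated.Subcategory

variable {C}
variable (S : Triangulated.Subcategory C) [ObjectProperty.IsClosedUnderIsomorphisms S.P]

lemma ext₂ (T : Triangle C) (hT : T ∈ distTriang C) (h₁ : S.P T.obj₁) (h₃ : S.P T.obj₃) :
    S.P T.obj₂ := by
  simpa only [ObjectProperty.isoClosure_eq_self] using S.ext₂' T hT h₁ h₃

lemma ext₃ (T : Triangle C) (hT : T ∈ distTriang C) (h₁ : S.P T.obj₁) (h₂ : S.P T.obj₂) :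
    S.P T.obj₃ :=
  S.ext₂ T.rotate (rot_of_distTriang _ hT) h₂ (S.shift _ 1 h₁)

open ZeroObject in
lemma zero : S.P 0 := by
  obtain ⟨Z, hZ, h⟩ := S.zero'
  exact ObjectProperty.prop_of_iso S.P hZ.isoZero h

end Triangulated.Subcategory

/-! ### Auxiliary material: Thomason's classification argument -/

section ThomasonAux

variable {C}
variable (S : Triangulated.Subcategory C) [ObjectProperty.IsClosedUnderIsomorphisms S.P]

namespace ThomasonAux

lemma mem_of_iso (P : C → Prop) [ObjectProperty.IsClosedUnderIsomorphisms P] {X Y : C}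
    (e : X ≅ Y) (h : P X) : P Y :=
  ObjectProperty.prop_of_iso P e h

open ZeroObject

attribute [local instance] Limits.preservesBinaryBiproducts_of_preservesBiproducts

lemma P_add {A B : C} (hA : S.P A) (hB : S.P B) : S.P (A ⊞ B) :=
  S.ext₂ _ (binaryBiproductTriangle_distinguished A B) hA hB

lemma P_cancel {A B : C} (h : S.P (A ⊞ B)) (hB : S.P B) : S.P A :=
  S.ext₃ _ (binaryBiproductTriangle_distinguished B A) hB
    (mem_of_iso S.P (biprod.braiding A B) h)

/-- The associativity isomorphism for binary biproducts. -/
noncomputable def assocIso (A B D : C) : (A ⊞ B) ⊞ D ≅ A ⊞ (B ⊞ D) where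
  hom := biprod.lift (biprod.fst ≫ biprod.fst)
    (biprod.lift (biprod.fst ≫ biprod.snd) biprod.snd)
  inv := biprod.lift (biprod.lift biprod.fst (biprod.snd ≫ biprod.fst))
    (biprod.snd ≫ biprod.snd)
  hom_inv_id := by ext <;> simp
  inv_hom_id := by ext <;> simp

/-- The "shuffle" isomorphism exchanging the two middle factors. -/
noncomputable def shuffleIso (A B A' B' : C) :
    (A ⊞ B) ⊞ (A' ⊞ B') ≅ (A ⊞ A') ⊞ (B ⊞ B') where
  hom := biprod.lift
    (biprod.lift (biprod.fst ≫ biprod.fst) (biprod.snd ≫ biprod.fst))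
    (biprod.lift (biprod.fst ≫ biprod.snd) (biprod.snd ≫ biprod.snd))
  inv := biprod.lift
    (biprod.lift (biprod.fst ≫ biprod.fst) (biprod.snd ≫ biprod.fst))
    (biprod.lift (biprod.fst ≫ biprod.snd) (biprod.snd ≫ biprod.snd))
  hom_inv_id := by ext <;> simp
  inv_hom_id := by ext <;> simp

/-- A binary biproduct is a product over `Fin 2`. -/
noncomputable def biprodPiIso (f : Fin 2 → C) : (f 0 ⊞ f 1) ≅ ∏ᶜ f where
  hom := Pi.lift (Fin.cons biprod.fst (Fin.cons biprod.snd finZeroElim))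
  inv := biprod.lift (Pi.π f 0) (Pi.π f 1)
  hom_inv_id := by apply biprod.hom_ext <;> simp
  inv_hom_id := by
    apply limit.hom_ext
    rintro ⟨j⟩
    fin_cases j <;> simp

lemma ext₂_pair {T₁ T₂ : Triangle C} (h₁ : T₁ ∈ distTriang C) (h₂ : T₂ ∈ distTriang C)
    (m₁ : S.P (T₁.obj₁ ⊞ T₂.obj₁)) (m₃ : S.P (T₁.obj₃ ⊞ T₂.obj₃)) :
    S.P (T₁.obj₂ ⊞ T₂.obj₂) := by
  have hT : ∀ j : Fin 2, (![T₁, T₂] j) ∈ distTriang C := by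
    intro j; fin_cases j <;> assumption
  have h := S.ext₂ _ (productTriangle_distinguished _ hT)
    (mem_of_iso S.P (biprodPiIso (fun j => (![T₁, T₂] j).obj₁)) m₁)
    (mem_of_iso S.P (biprodPiIso (fun j => (![T₁, T₂] j).obj₃)) m₃)
  exact mem_of_iso S.P (biprodPiIso (fun j => (![T₁, T₂] j).obj₂)).symm h

lemma ext₃_pair {T₁ T₂ : Triangle C} (h₁ : T₁ ∈ distTriang C) (h₂ : T₂ ∈ distTriang C)
    (m₁ : S.P (T₁.obj₁ ⊞ T₂.obj₁)) (m₂ : S.P (T₁.obj₂ ⊞ T₂.obj₂)) :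
    S.P (T₁.obj₃ ⊞ T₂.obj₃) := by
  have hT : ∀ j : Fin 2, (![T₁, T₂] j) ∈ distTriang C := by
    intro j; fin_cases j <;> assumption
  have h := S.ext₃ _ (productTriangle_distinguished _ hT)
    (mem_of_iso S.P (biprodPiIso (fun j => (![T₁, T₂] j).obj₁)) m₁)
    (mem_of_iso S.P (biprodPiIso (fun j => (![T₁, T₂] j).obj₂)) m₂)
  exact mem_of_iso S.P (biprodPiIso (fun j => (![T₁, T₂] j).obj₃)).symm h

variable (hdense : ∀ X : C, ∃ Y : C, S.P (X ⊞ Y))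

include hdense

/-- For a dense subcategory, `X ⊞ X⟦1⟧` always belongs to the subcategory. -/
lemma mem_self_biprod_shift (X : C) : S.P (X ⊞ X⟦(1 : ℤ)⟧) := by
  obtain ⟨Y, hY⟩ := hdense X
  obtain ⟨W, hW⟩ := hdense Y
  have h3 : S.P (X⟦(1 : ℤ)⟧ ⊞ W) := by
    refine ext₃_pair S (rot_of_distTriang _ (binaryBiproductTriangle_distinguished X Y))
      (binaryBiproductTriangle_distinguished (0 : C) W) ?_ ?_
    · exact mem_of_iso S.P (isoBiprodZero (isZero_zero C)) hY
    · exact mem_of_iso S.P (biprod.mapIso (Iso.refl Y) (isoZeroBiprod (isZero_zero C))) hW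
  exact P_cancel S (mem_of_iso S.P (shuffleIso X Y (X⟦(1 : ℤ)⟧) W) (P_add S hY h3)) hW

/-- The middle term of a distinguished triangle is stably equivalent to the
biproduct of the outer terms. -/
lemma rel_triangle (T : Triangle C) (hT : T ∈ distTriang C) :
    ∃ W : C, S.P (T.obj₂ ⊞ W) ∧ S.P ((T.obj₁ ⊞ T.obj₃) ⊞ W) := by
  obtain ⟨A', hA⟩ := hdense T.obj₁
  obtain ⟨C', hC⟩ := hdense T.obj₃
  refine ⟨A' ⊞ C', ?_, ?_⟩
  · exact ext₂_pair S hT (binaryBiproductTriangle_distinguished A' C') hA hC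
  · exact mem_of_iso S.P (shuffleIso T.obj₁ T.obj₃ A' C').symm (P_add S hA hC)

/-- The equivalence relation underlying Thomason's argument. -/
def qSetoid : Setoid C where
  r X Y := ∃ W : C, S.P (X ⊞ W) ∧ S.P (Y ⊞ W)
  iseqv := by
    constructor
    · intro X
      obtain ⟨W, hW⟩ := hdense X
      exact ⟨W, hW, hW⟩
    · rintro X Y ⟨W, h₁, h₂⟩
      exact ⟨W, h₂, h₁⟩
    · rintro X Y Z ⟨W, hXW, hYW⟩ ⟨V, hYV, hZV⟩
      refine ⟨W ⊞ (Y ⊞ V), ?_, ?_⟩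
      · exact mem_of_iso S.P (assocIso X W (Y ⊞ V)) (P_add S hXW hYV)
      · exact mem_of_iso S.P
          (shuffleIso Z V Y W ≪≫ biprod.mapIso (Iso.refl (Z ⊞ Y)) (biprod.braiding V W) ≪≫
            shuffleIso Z Y W V ≪≫ assocIso Z W (Y ⊞ V)) (P_add S hZV hYW)

lemma rel_of_iso {X Y : C} (e : X ≅ Y) : (qSetoid S hdense).r X Y := by
  obtain ⟨W, hW⟩ := hdense X
  exact ⟨W, hW, mem_of_iso S.P (biprod.mapIso e (Iso.refl W)) hW⟩

/-- The group of objects modulo stable equivalence. -/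
def QG : Type u := Quotient (qSetoid S hdense)

noncomputable instance qAdd : Add (QG S hdense) :=
  ⟨Quotient.map₂ (fun A B => A ⊞ B) (by
    rintro X X' ⟨W, hXW, hX'W⟩ Y Y' ⟨V, hYV, hY'V⟩
    exact ⟨W ⊞ V,
      mem_of_iso S.P (shuffleIso X Y W V).symm (P_add S hXW hYV),
      mem_of_iso S.P (shuffleIso X' Y' W V).symm (P_add S hX'W hY'V)⟩)⟩

noncomputable instance qZero : Zero (QG S hdense) := ⟨Quotient.mk _ (0 : C)⟩

noncomputable instance qNeg : Neg (QG S hdense) :=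
  ⟨Quotient.map (fun A => A⟦(1 : ℤ)⟧) (by
    rintro X Y ⟨W, hXW, hYW⟩
    exact ⟨W⟦(1 : ℤ)⟧,
      mem_of_iso S.P ((shiftFunctor C (1 : ℤ)).mapBiprod X W) (S.shift _ _ hXW),
      mem_of_iso S.P ((shiftFunctor C (1 : ℤ)).mapBiprod Y W) (S.shift _ _ hYW)⟩)⟩

noncomputable instance qGroup : AddCommGroup (QG S hdense) where
  add x y := x + y
  zero := 0
  neg x := -x
  add_assoc x y z := by
    induction x using Quotient.ind
    induction y using Quotient.ind
    induction z using Quotient.ind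
    exact Quotient.sound (rel_of_iso S hdense (assocIso _ _ _))
  zero_add x := by
    induction x using Quotient.ind
    exact Quotient.sound (rel_of_iso S hdense (isoZeroBiprod (isZero_zero C)).symm)
  add_zero x := by
    induction x using Quotient.ind
    exact Quotient.sound (rel_of_iso S hdense (isoBiprodZero (isZero_zero C)).symm)
  add_comm x y := by
    induction x using Quotient.ind
    induction y using Quotient.ind
    exact Quotient.sound (rel_of_iso S hdense (biprod.braiding _ _))
  nsmul := nsmulRec
  zsmul := zsmulRec
  neg_add_cancel x := by
    induction x using Quotient.ind
    rename_i X
    refine Quotient.sound ⟨0, ?_, ?_⟩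
    · exact mem_of_iso S.P
        (biprod.braiding X (X⟦(1 : ℤ)⟧) ≪≫ isoBiprodZero (isZero_zero C))
        (mem_self_biprod_shift S hdense X)
    · exact mem_of_iso S.P (isoBiprodZero (isZero_zero C)) S.zero

/-- The class map `C → QG`. -/
def qcls (X : C) : QG S hdense := Quotient.mk _ X

lemma qcls_add (X Y : C) :
    qcls S hdense (X ⊞ Y) = qcls S hdense X + qcls S hdense Y := rfl

lemma qcls_eq_zero {X : C} (hX : S.P X) : qcls S hdense X = 0 :=
  Quotient.sound ⟨0, mem_of_iso S.P (isoBiprodZero (isZero_zero C)) hX,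
    mem_of_iso S.P (isoBiprodZero (isZero_zero C)) S.zero⟩

lemma P_of_qcls_eq_zero {X : C} (h : qcls S hdense X = 0) : S.P X := by
  obtain ⟨W, hXW, h0W⟩ := Quotient.exact h
  have hW : S.P W := mem_of_iso S.P (isoZeroBiprod (isZero_zero C)).symm h0W
  exact P_cancel S hXW hW

/-- The induced homomorphism `K0 C →+ QG`. -/
noncomputable def phi : K0 C →+ QG S hdense :=
  QuotientAddGroup.lift _ (FreeAbelianGroup.lift (qcls S hdense)) (by
    intro x hx
    have hle : K0Relations C ≤ (FreeAbelianGroup.lift (qcls S hdense)).ker := by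
      rw [K0Relations, AddSubgroup.closure_le]
      rintro y ⟨T, hT, rfl⟩
      simp only [SetLike.mem_coe, AddMonoidHom.mem_ker, map_sub, FreeAbelianGroup.lift_apply_of]
      obtain ⟨W, h₂, h₁₃⟩ := rel_triangle S hdense T hT
      have h : qcls S hdense T.obj₂ = qcls S hdense (T.obj₁ ⊞ T.obj₃) :=
        Quotient.sound ⟨W, h₂, h₁₃⟩
      rw [sub_sub, sub_eq_zero, h, qcls_add]
    exact hle hx)

lemma phi_cls (X : C) : phi S hdense (K0.cls C X) = qcls S hdense X :=
  (QuotientAddGroup.lift_mk _ _ _).trans (FreeAbelianGroup.lift_apply_of _ _)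

lemma phi_ofSub (y : K0Sub C S) : phi S hdense (K0.ofSub C S y) = 0 := by
  obtain ⟨z, rfl⟩ := QuotientAddGroup.mk'_surjective (K0SubRelations C S) y
  induction z using FreeAbelianGroup.induction_on with
  | zero => exact map_zero (((phi S hdense).comp (K0.ofSub C S)).comp (QuotientAddGroup.mk' (K0SubRelations C S)))
  | of a =>
    have h1 : K0.ofSub C S (QuotientAddGroup.mk' _ (FreeAbelianGroup.of a)) = K0.cls C a.1 :=
      (QuotientAddGroup.lift_mk _ _ _).trans (FreeAbelianGroup.lift_apply_of _ _)
    rw [h1, phi_cls]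
    exact qcls_eq_zero S hdense a.2
  | neg a ha => exact (map_neg (((phi S hdense).comp (K0.ofSub C S)).comp (QuotientAddGroup.mk' (K0SubRelations C S))) (FreeAbelianGroup.of a)).trans (neg_eq_zero.mpr ha)
  | add a b ha hb => exact (map_add (((phi S hdense).comp (K0.ofSub C S)).comp (QuotientAddGroup.mk' (K0SubRelations C S))) a b).trans ((congrArg₂ (· + ·) ha hb).trans (add_zero 0))

end ThomasonAux

end ThomasonAux

open ThomasonAux in
theorem stmt16
    (Sstar : Triangulated.Subcategory C) [ObjectProperty.IsClosedUnderIsomorphisms Sstar.P]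
    -- S* is dense in D^b(X):
    (hdense : ∀ X : C, ∃ Y : C, Sstar.P (X ⊞ Y))
    (NS : Type*) [AddCommGroup NS] (CH2 : Type*) [AddCommGroup CH2]
    -- the Picard number satisfies ρ(X) ≥ 2:
    (hrho : 2 ≤ Module.finrank ℤ NS)
    -- the identification CH*(X) = K(X), CH*(X) = CH⁰ ⊕ CH¹ ⊕ CH² = ℤ ⊕ NS ⊕ CH²:
    (kIso : K0 C ≃+ ℤ × NS × CH2)
    -- the Beauville–Voisin class c_X ∈ CH²(X), of degree 1:
    (c : CH2) (deg : CH2 →+ ℤ) (hc : deg c = 1)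
    -- K(S*) = R(X) = ℤ ⊕ NS ⊕ ℤ·c_X  (theorem of [HuyJEMS] for ρ(X) ≥ 2):
    (hR : ∀ x : K0 C, x ∈ (K0.ofSub C Sstar).range ↔
      (kIso x).2.2 ∈ AddSubgroup.zmultiples c) :
    -- CH²(X) ≅ ℤ  if and only if  D^b(X) = S*:
    Function.Bijective deg ↔ ∀ X : C, Sstar.P X := by
  constructor
  · -- CH² ≅ ℤ implies that every object lies in S*
    intro hdeg X
    have hz : ∀ z : CH2, z ∈ AddSubgroup.zmultiples c := by
      intro z
      refine AddSubgroup.mem_zmultiples_iff.mpr ⟨deg z, hdeg.injective ?_⟩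
      rw [map_zsmul, hc, smul_eq_mul, mul_one]
    obtain ⟨y, hy⟩ := (hR (K0.cls C X)).2 (hz _)
    have h0 : phi Sstar hdense (K0.cls C X) = 0 := by
      rw [← hy, phi_ofSub]
    exact P_of_qcls_eq_zero Sstar hdense ((phi_cls Sstar hdense X) ▸ h0)
  · -- D^b(X) = S* implies CH² ≅ ℤ
    intro hall
    have hrange : ∀ x : K0 C, x ∈ (K0.ofSub C Sstar).range := by
      intro x
      obtain ⟨z, rfl⟩ := QuotientAddGroup.mk'_surjective (K0Relations C) x
      induction z using FreeAbelianGroup.induction_on with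
      | zero => exact ⟨0, map_zero _⟩
      | of a =>
        exact ⟨QuotientAddGroup.mk' _ (FreeAbelianGroup.of ⟨a, hall a⟩),
          (QuotientAddGroup.lift_mk _ _ _).trans (FreeAbelianGroup.lift_apply_of _ _)⟩
      | neg a ha =>
        obtain ⟨y, hy⟩ := ha
        exact ⟨-y, by rw [map_neg, hy]; rfl⟩
      | add a b ha hb =>
        obtain ⟨y, hy⟩ := ha
        obtain ⟨w, hw⟩ := hb
        exact ⟨y + w, by rw [map_add, hy, hw]; rfl⟩
    have hzmul : ∀ z : CH2, z ∈ AddSubgroup.zmultiples c := by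
      intro z
      have h := (hR (kIso.symm (0, 0, z))).1 (hrange _)
      simpa using h
    constructor
    · intro a b hab
      obtain ⟨m, hm⟩ := AddSubgroup.mem_zmultiples_iff.mp (hzmul a)
      obtain ⟨n, hn⟩ := AddSubgroup.mem_zmultiples_iff.mp (hzmul b)
      have hma : deg a = m := by rw [← hm, map_zsmul, hc, smul_eq_mul, mul_one]
      have hnb : deg b = n := by rw [← hn, map_zsmul, hc, smul_eq_mul, mul_one]
      rw [← hm, ← hn, ← hma, ← hnb, hab]
    · intro n
      exact ⟨n • c, by rw [map_zsmul, hc, smul_eq_mul, mul_one]⟩
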